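/- arXiv:1307.3718 — 2 statements merged into one kernel-verified Lean document; each statement's English description precedes it below -/
import Mathlib

section
/- The generalized Jacobi polynomial J_k^{(-1,-2)}(x) = (1−x)(1+x)² R_{k-3}^{(1,2)}(x) admits, for k ≥ 3, the Legendre expansion J_k^{(-1,-2)}(x) = (2/(2k−3)) [L_{k-3}(x) + ((2k−3)/(2k−1)) L_{k-2}(x) − L_{k-1}(x) − ((2k−3)/(2k−1)) L_k(x)]. -/
/-- Classical Jacobi polynomial `P_n^{(a,b)}(x)` (real parameters), via the
hypergeometric sum representation. -/
noncomputable def jacobiP (n : ℕ) (a b x : ℝ) : ℝ :=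
  (Real.Gamma (a + n + 1) / (n.factorial * Real.Gamma (a + b + n + 1))) *
    ∑ m ∈ Finset.range (n + 1),
      (n.choose m : ℝ) * (Real.Gamma (a + b + n + m + 1) / Real.Gamma (a + m + 1)) *
        ((x - 1) / 2) ^ m

/-- Normalized Jacobi polynomial `R_n^{(a,b)}(x) = P_n^{(a,b)}(x)/P_n^{(a,b)}(1)`. -/
noncomputable def jacobiR (n : ℕ) (a b x : ℝ) : ℝ := jacobiP n a b x / jacobiP n a b 1

/-- Legendre polynomial `L_n = P_n^{(0,0)}`. -/
noncomputable def legendreL (n : ℕ) (x : ℝ) : ℝ := jacobiP n 0 0 x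

open Finset

noncomputable def Ac (n m : ℕ) : ℝ :=
  (n.choose m : ℝ) * (n + m + 2).factorial / ((m + 1).factorial * (n + 2).factorial)

noncomputable def Bc (n m : ℕ) : ℝ :=
  (n.choose m : ℝ) * (n + m + 3).factorial / ((m + 1).factorial * (n + 3).factorial)

noncomputable def cc (n m : ℕ) : ℝ := (n.choose m : ℝ) * ((n + m).choose m : ℝ)

lemma gammaNat (m : ℕ) (c : ℝ) (h : c = (m : ℝ) + 1) : Real.Gamma c = m.factorial := by
  rw [h, Real.Gamma_nat_eq_factorial]

lemma jacobiP_11 (n : ℕ) (x : ℝ) :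
    jacobiP n 1 1 x = ((n : ℝ) + 1) * ∑ m ∈ range (n + 1), Ac n m * ((x - 1) / 2) ^ m := by
  rw [jacobiP, gammaNat (n+1) _ (by push_cast; ring), gammaNat (n+2) _ (by push_cast; ring)]
  rw [Finset.mul_sum, Finset.mul_sum]
  refine Finset.sum_congr rfl fun m _ => ?_
  rw [gammaNat (n+m+2) _ (by push_cast; ring), gammaNat (m+1) _ (by push_cast; ring), Ac]
  have h1 : ((n+1).factorial : ℝ) = (n+1) * n.factorial := by rw [Nat.factorial_succ]; push_cast; ring
  have h2 : ((n+2).factorial : ℝ) ≠ 0 := by positivity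
  have h3 : (n.factorial : ℝ) ≠ 0 := by positivity
  have h4 : ((m+1).factorial : ℝ) ≠ 0 := by positivity
  rw [h1]; field_simp

lemma jacobiP_12 (n : ℕ) (x : ℝ) :
    jacobiP n 1 2 x = ((n : ℝ) + 1) * ∑ m ∈ range (n + 1), Bc n m * ((x - 1) / 2) ^ m := by
  rw [jacobiP, gammaNat (n+1) _ (by push_cast; ring), gammaNat (n+3) _ (by push_cast; ring)]
  rw [Finset.mul_sum, Finset.mul_sum]
  refine Finset.sum_congr rfl fun m _ => ?_
  rw [gammaNat (n+m+3) _ (by push_cast; ring), gammaNat (m+1) _ (by push_cast; ring), Bc]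
  have h1 : ((n+1).factorial : ℝ) = (n+1) * n.factorial := by rw [Nat.factorial_succ]; push_cast; ring
  have h2 : ((n+3).factorial : ℝ) ≠ 0 := by positivity
  have h3 : (n.factorial : ℝ) ≠ 0 := by positivity
  have h4 : ((m+1).factorial : ℝ) ≠ 0 := by positivity
  rw [h1]; field_simp

lemma legendreL_eq (n : ℕ) (x : ℝ) :
    legendreL n x = ∑ m ∈ range (n + 1), cc n m * ((x - 1) / 2) ^ m := by
  rw [legendreL, jacobiP, gammaNat n _ (by push_cast; ring), gammaNat n _ (by push_cast; ring)]
  rw [Finset.mul_sum]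
  refine Finset.sum_congr rfl fun m _ => ?_
  rw [gammaNat (n+m) _ (by push_cast; ring), gammaNat m _ (by push_cast; ring), cc]
  have key : (((n+m).choose m : ℕ) : ℝ) * m.factorial * n.factorial = (n+m).factorial := by
    push_cast [← Nat.add_choose_mul_factorial_mul_factorial n m]; ring
  have h3 : (n.factorial : ℝ) ≠ 0 := by positivity
  have h4 : (m.factorial : ℝ) ≠ 0 := by positivity
  field_simp
  rw [← key]; ring

lemma jacobiP_12_one (n : ℕ) : jacobiP n 1 2 1 = (n : ℝ) + 1 := by
  rw [jacobiP_12]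
  have : ∑ m ∈ range (n + 1), Bc n m * ((1 - 1) / 2 : ℝ) ^ m = Bc n 0 := by
    rw [Finset.sum_eq_single 0]
    · simp
    · intro b _ hb
      simp [zero_pow hb]
    · simp
  rw [this, Bc]
  have h2 : ((n+3).factorial : ℝ) ≠ 0 := by positivity
  field_simp
  simp

lemma shift1 (N : ℕ) (f : ℕ → ℝ) (t : ℝ) :
    ∑ m ∈ range N, f m * t ^ (m + 1)
      = ∑ j ∈ range (N + 1), (if j = 0 then 0 else f (j - 1)) * t ^ j := by
  rw [Finset.sum_range_succ']
  simp

lemma shift2 (N : ℕ) (f : ℕ → ℝ) (t : ℝ) :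
    ∑ m ∈ range N, f m * t ^ (m + 2)
      = ∑ j ∈ range (N + 2), (if j ≤ 1 then 0 else f (j - 2)) * t ^ j := by
  rw [Finset.sum_range_succ', Finset.sum_range_succ']
  simp

lemma Ac_zero (n m : ℕ) (h : n < m) : Ac n m = 0 := by
  simp [Ac, Nat.choose_eq_zero_of_lt h]

lemma Bc_zero (n m : ℕ) (h : n < m) : Bc n m = 0 := by
  simp [Bc, Nat.choose_eq_zero_of_lt h]

lemma cc_zero (n m : ℕ) (h : n < m) : cc n m = 0 := by
  simp [cc, Nat.choose_eq_zero_of_lt h]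

lemma cch (a b n : ℕ) (h : n = a + b) :
    (n.choose b : ℝ) = n.factorial / (a.factorial * b.factorial) := by
  subst h
  rw [eq_div_iff (by positivity)]
  have := Nat.add_choose_mul_factorial_mul_factorial a b
  push_cast [← this]
  ring

lemma factR (m k : ℕ) (h : m = k + 1) : (m.factorial : ℝ) = ((k : ℝ) + 1) * k.factorial := by
  subst h
  rw [Nat.factorial_succ]
  push_cast
  ring


lemma coefB (n j : ℕ) :
    2 * Bc n j + 2 * (if j = 0 then 0 else Bc n (j - 1)) = Ac n j + Ac (n + 1) j := by
  rcases j with _ | i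
  · -- j = 0
    simp only [if_pos rfl, Bc, Ac, Nat.choose_zero_right]
    have h1 : ((n + 3).factorial : ℝ) ≠ 0 := by positivity
    have h2 : ((n + 2).factorial : ℝ) ≠ 0 := by positivity
    rw [show n + 0 + 3 = n + 3 from by omega, show n + 0 + 2 = n + 2 from by omega,
      show n + 1 + 0 + 2 = n + 3 from by omega, show n + 1 + 2 = n + 3 from by omega]
    field_simp
    norm_num
  · -- j = i + 1
    simp only [Nat.succ_ne_zero, if_neg, Nat.add_sub_cancel]
    rcases lt_or_ge n i with hni | hni
    · -- n < i : everything vanishes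
      rw [Bc_zero n (i+1) (by omega), Bc_zero n i (by omega),
        Ac_zero n (i+1) (by omega), Ac_zero (n+1) (i+1) (by omega)]
      simp
    · obtain ⟨d, rfl⟩ : ∃ d, n = i + d := ⟨n - i, by omega⟩
      rcases d with _ | e
      · -- n = i
        rw [Bc_zero (i+0) (i+1) (by omega), Ac_zero (i+0) (i+1) (by omega)]
        simp only [Nat.add_zero]
        rw [Bc, Ac, Nat.choose_self, Nat.choose_self]
        rw [show i + 1 + (i + 1) + 2 = (i + i + 3) + 1 from by omega,
          factR ((i+i+3)+1) (i+i+3) rfl,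
          show i + 1 + 1 = (i + 1) + 1 from by omega,
          factR ((i+1)+1) (i+1) rfl,
          show i + 1 + 2 = i + 3 from by omega]
        have h1 : ((i + 3).factorial : ℝ) ≠ 0 := by positivity
        have h2 : ((i + 1).factorial : ℝ) ≠ 0 := by positivity
        have h3 : ((i + i + 3).factorial : ℝ) ≠ 0 := by positivity
        push_cast
        field_simp
        ring
      · -- n = i + e + 1
        rw [Bc, Bc, Ac, Ac]
        rw [cch e (i+1) (i+(e+1)) (by omega), cch (e+1) i (i+(e+1)) (by omega),
          cch (e+1) (i+1) (i+(e+1)+1) (by omega)]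
        rw [show i + (e+1) + (i+1) + 3 = (i+i+e+4) + 1 from by omega,
          show i + (e+1) + i + 3 = i+i+e+4 from by omega,
          show i + (e+1) + (i+1) + 2 = i+i+e+4 from by omega,
          show i + (e+1) + 1 + (i+1) + 2 = (i+i+e+4) + 1 from by omega,
          show i + (e+1) + 3 = ((i+e+3)) + 1 from by omega,
          show i + (e+1) + 2 = (i+e+2) + 1 from by omega,
          show i + (e+1) = (i+e+1) from by omega]
        rw [factR ((i+i+e+4)+1) (i+i+e+4) rfl, factR ((i+e+3)+1) (i+e+3) rfl,
          factR (i+e+3) (i+e+2) rfl, factR (i+e+2) (i+e+1) rfl,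
          factR (i+1+1) (i+1) rfl, factR (i+1) i rfl, factR (e+1) e rfl]
        have h1 : ((i+i+e+4).factorial : ℝ) ≠ 0 := by positivity
        have h2 : ((i+e+1).factorial : ℝ) ≠ 0 := by positivity
        have h3 : (i.factorial : ℝ) ≠ 0 := by positivity
        have h4 : (e.factorial : ℝ) ≠ 0 := by positivity
        push_cast
        field_simp
        ring

set_option maxHeartbeats 1600000 in
lemma coefA (n j : ℕ) :
    (-4 : ℝ) * ((if j = 0 then 0 else Ac n (j - 1)) + (if j ≤ 1 then 0 else Ac n (j - 2)))
      = (2 / (2 * (n : ℝ) + 3)) * (cc n j - cc (n + 2) j) := by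
  have hden : (2 * (n : ℝ) + 3) ≠ 0 := by positivity
  rcases j with _ | j
  · simp [cc]
  rcases j with _ | i
  · -- j = 1
    norm_num [cc, Nat.choose_one_right, Ac]
    have h2 : ((n + 2).factorial : ℝ) ≠ 0 := by positivity
    rw [show n + 0 + 2 = n + 2 from by omega]
    field_simp
    ring
  · -- j = i + 2
    have hif1 : (i + 2 ≠ 0) := by omega
    have hif2 : ¬ (i + 2 ≤ 1) := by omega
    simp only [if_neg hif1, if_neg hif2, show i + 2 - 1 = i + 1 from by omega,
      show i + 2 - 2 = i from by omega]
    by_cases h0 : n < i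
    · rw [Ac_zero n (i+1) (by omega), Ac_zero n i (by omega),
        cc_zero n (i+2) (by omega), cc_zero (n+2) (i+2) (by omega)]
      ring
    by_cases h1 : n = i
    · subst h1
      rw [Ac_zero n (n+1) (by omega), cc_zero n (n+2) (by omega)]
      rw [Ac, cc, Nat.choose_self, Nat.choose_self,
        cch (n+2) (n+2) (n + 2 + (n + 2)) (by omega)]
      rw [factR (n+2+(n+2)) (n+n+3) (by omega), factR (n+n+3) (n+n+2) (by omega),
        factR (n+2) (n+1) (by omega)]
      have h2 : ((n+1).factorial : ℝ) ≠ 0 := by positivity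
      have h3 : ((n+n+2).factorial : ℝ) ≠ 0 := by positivity
      push_cast
      field_simp
      ring
    by_cases h2 : n = i + 1
    · subst h2
      rw [cc_zero (i+1) (i+2) (by omega)]
      rw [Ac, Ac, cc, Nat.choose_self,
        cch 1 i (i+1) (by omega),
        cch 1 (i+2) (i+1+2) (by omega),
        cch (i+3) (i+2) (i+1+2+(i+2)) (by omega)]
      rw [factR (i+1+(i+1)+2) (i+i+3) (by omega),
        factR (i+3+(i+2)) (i+i+4) (by omega), factR (i+i+4) (i+i+3) (by omega),
        factR (i+3) (i+2) (by omega), factR (i+2) (i+1) (by omega),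
        factR (i+1) i (by omega)]
      have k1 : ((i.factorial : ℝ)) ≠ 0 := by positivity
      have k2 : ((i+i+3).factorial : ℝ) ≠ 0 := by positivity
      push_cast at hden ⊢
      field_simp
      ring
    · obtain ⟨e, rfl⟩ : ∃ e, n = i + e + 2 := ⟨n - i - 2, by omega⟩
      rw [Ac, Ac, cc, cc,
        cch (e+1) (i+1) (i+e+2) (by omega),
        cch (e+2) i (i+e+2) (by omega),
        cch e (i+2) (i+e+2) (by omega),
        cch (i+e+2) (i+2) (i+e+2+(i+2)) (by omega),
        cch (e+2) (i+2) (i+e+2+2) (by omega),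
        cch (i+e+4) (i+2) (i+e+2+2+(i+2)) (by omega)]
      rw [show i+e+2+2+(i+2) = i+i+e+6 from by omega,
        show i+e+2+(i+1)+2 = i+i+e+5 from by omega,
        show i+e+2+(i+2) = i+i+e+4 from by omega,
        show i+e+2+i+2 = i+i+e+4 from by omega,
        show i+e+2+2 = i+e+4 from by omega]
      rw [factR (i+i+e+6) (i+i+e+5) (by omega),
        factR (i+i+e+5) (i+i+e+4) (by omega),
        factR (i+e+4) (i+e+3) (by omega), factR (i+e+3) (i+e+2) (by omega),
        factR (i+2) (i+1) (by omega), factR (i+1) i (by omega),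
        factR (e+2) (e+1) (by omega), factR (e+1) e (by omega)]
      have k1 : ((i.factorial : ℝ)) ≠ 0 := by positivity
      have k2 : ((e.factorial : ℝ)) ≠ 0 := by positivity
      have k3 : ((i+e+2).factorial : ℝ) ≠ 0 := by positivity
      have k4 : ((i+i+e+4).factorial : ℝ) ≠ 0 := by positivity
      push_cast at hden ⊢
      field_simp
      ring

lemma lemA (n : ℕ) (x : ℝ) :
    (1 - x) * (1 + x) * ∑ m ∈ range (n + 1), Ac n m * ((x - 1) / 2) ^ m
      = (2 / (2 * (n : ℝ) + 3)) * (legendreL n x - legendreL (n + 2) x) := by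
  set t : ℝ := (x - 1) / 2 with ht
  have hx1 : (1 - x) * (1 + x) = -4 * (t + t ^ 2) := by rw [ht]; ring
  have hL1 : legendreL n x = ∑ j ∈ range (n + 3), cc n j * t ^ j := by
    rw [legendreL_eq, Finset.sum_range_succ (fun j => cc n j * t ^ j) (n+2),
      Finset.sum_range_succ (fun j => cc n j * t ^ j) (n+1),
      cc_zero n (n+1) (by omega), cc_zero n (n+2) (by omega)]
    simp
    rfl
  have hL2 : legendreL (n + 2) x = ∑ j ∈ range (n + 3), cc (n + 2) j * t ^ j := by
    rw [legendreL_eq]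
  rw [hx1, hL1, hL2]
  have e1 : (-4 : ℝ) * (t + t ^ 2) * ∑ m ∈ range (n + 1), Ac n m * t ^ m
      = (∑ m ∈ range (n + 1), (-4 * Ac n m) * t ^ (m + 1))
        + ∑ m ∈ range (n + 1), (-4 * Ac n m) * t ^ (m + 2) := by
    rw [Finset.mul_sum, ← Finset.sum_add_distrib]
    exact Finset.sum_congr rfl fun m _ => by ring
  rw [e1, shift1, shift2]
  have e2 : ∑ j ∈ range (n + 2), (if j = 0 then 0 else -4 * Ac n (j - 1)) * t ^ j
      = ∑ j ∈ range (n + 3), (if j = 0 then 0 else -4 * Ac n (j - 1)) * t ^ j := by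
    rw [Finset.sum_range_succ (fun j => (if j = 0 then 0 else -4 * Ac n (j - 1)) * t ^ j) (n+2)]
    simp [Ac_zero n (n+1) (by omega)]
  rw [e2, ← Finset.sum_add_distrib, ← Finset.sum_sub_distrib, Finset.mul_sum]
  refine Finset.sum_congr rfl fun j _ => ?_
  have h := coefA n j
  have h1 : (if j = 0 then (0:ℝ) else -4 * Ac n (j - 1)) = -4 * (if j = 0 then 0 else Ac n (j - 1)) := by
    split <;> ring
  have h2 : (if j ≤ 1 then (0:ℝ) else -4 * Ac n (j - 2)) = -4 * (if j ≤ 1 then 0 else Ac n (j - 2)) := by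
    split <;> ring
  rw [h1, h2]
  linear_combination (t ^ j) * h

lemma lemB (n : ℕ) (x : ℝ) :
    (1 + x) * ∑ m ∈ range (n + 1), Bc n m * ((x - 1) / 2) ^ m
      = (∑ m ∈ range (n + 1), Ac n m * ((x - 1) / 2) ^ m)
        + ∑ m ∈ range (n + 2), Ac (n + 1) m * ((x - 1) / 2) ^ m := by
  set t : ℝ := (x - 1) / 2 with ht
  have hx1 : (1 + x) = 2 + 2 * t := by rw [ht]; ring
  have e1 : (2 + 2 * t) * ∑ m ∈ range (n + 1), Bc n m * t ^ m
      = (∑ m ∈ range (n + 1), (2 * Bc n m) * t ^ m)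
        + ∑ m ∈ range (n + 1), (2 * Bc n m) * t ^ (m + 1) := by
    rw [Finset.mul_sum, ← Finset.sum_add_distrib]
    exact Finset.sum_congr rfl fun m _ => by ring
  have e2 : ∑ m ∈ range (n + 1), (2 * Bc n m) * t ^ m
      = ∑ m ∈ range (n + 2), (2 * Bc n m) * t ^ m := by
    rw [Finset.sum_range_succ (fun m => (2 * Bc n m) * t ^ m) (n + 1)]
    simp [Bc_zero n (n+1) (by omega)]
  have e3 : ∑ m ∈ range (n + 1), Ac n m * t ^ m
      = ∑ m ∈ range (n + 2), Ac n m * t ^ m := by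
    rw [Finset.sum_range_succ (fun m => Ac n m * t ^ m) (n + 1)]
    simp [Ac_zero n (n+1) (by omega)]
  rw [hx1, e1, e2, e3, shift1, ← Finset.sum_add_distrib, ← Finset.sum_add_distrib]
  refine Finset.sum_congr rfl fun j _ => ?_
  have h := coefB n j
  have h1 : (if j = 0 then (0:ℝ) else 2 * Bc n (j - 1)) = 2 * (if j = 0 then 0 else Bc n (j - 1)) := by
    split <;> ring
  rw [h1]
  linear_combination (t ^ j) * h

theorem genJacobi_neg1neg2_legendre (k : ℕ) (hk : 3 ≤ k) (x : ℝ) :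
    (1 - x) * (1 + x) ^ 2 * jacobiR (k - 3) 1 2 x =
      (2 / (2 * (k : ℝ) - 3)) *
        (legendreL (k - 3) x + ((2 * (k : ℝ) - 3) / (2 * (k : ℝ) - 1)) * legendreL (k - 2) x -
          legendreL (k - 1) x - ((2 * (k : ℝ) - 3) / (2 * (k : ℝ) - 1)) * legendreL k x) := by
  obtain ⟨n, rfl⟩ : ∃ n, k = n + 3 := ⟨k - 3, by omega⟩
  rw [show n + 3 - 3 = n from by omega, show n + 3 - 2 = n + 1 from by omega,
    show n + 3 - 1 = n + 2 from by omega]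
  have hn1 : ((n : ℝ) + 1) ≠ 0 := by positivity
  have hR : jacobiR n 1 2 x = ∑ m ∈ range (n + 1), Bc n m * ((x - 1) / 2) ^ m := by
    rw [jacobiR, jacobiP_12_one, jacobiP_12]
    exact mul_div_cancel_left₀ _ hn1
  rw [hR]
  have hB := lemB n x
  have hA1 := lemA n x
  have hA2 := lemA (n + 1) x
  have hd1 : (2 * (n : ℝ) + 3) ≠ 0 := by positivity
  have hd2 : (2 * (n : ℝ) + 5) ≠ 0 := by positivity
  have key : (1 - x) * (1 + x) ^ 2 * ∑ m ∈ range (n + 1), Bc n m * ((x - 1) / 2) ^ m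
      = 2 / (2 * (n : ℝ) + 3) * (legendreL n x - legendreL (n + 2) x)
        + 2 / (2 * (n : ℝ) + 5) * (legendreL (n + 1) x - legendreL (n + 3) x) := by
    push_cast at hA2
    linear_combination ((1 - x) * (1 + x)) * hB + hA1 + hA2
  rw [key]
  push_cast
  set L0 := legendreL n x
  set L1 := legendreL (n + 1) x
  set L2 := legendreL (n + 2) x
  set L3 := legendreL (n + 3) x
  rw [show 2 * ((n : ℝ) + 3) - 3 = 2 * (n : ℝ) + 3 from by ring,
    show 2 * ((n : ℝ) + 3) - 1 = 2 * (n : ℝ) + 5 from by ring]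
  field_simp
  ring
end

section
/- Define φ_k(x) = (1−x²)(1−x) R_k^{(2,1)}(x). Then its second derivative satisfies D²φ_k(x) = (2(k+3)(k+4)/(2k+5)) R_{k+1}^{(1,2)}(x) − ((k+1)(k+3)/((k+3/2)(k+5/2))) R_k^{(1,2)}(x) − (2k(k+1)/(2k+3)) R_{k-1}^{(1,2)}(x) for all k ≥ 1. -/
noncomputable def cA (k m : ℕ) : ℝ :=
  (k.choose m : ℝ) * 2 * (k+m+3).factorial / ((m+2).factorial * (k+3).factorial)

noncomputable def cB (n m : ℕ) : ℝ :=
  (n.choose m : ℝ) * (n+m+3).factorial / ((m+1).factorial * (n+3).factorial)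

lemma jacobiP21 (k : ℕ) (x : ℝ) :
    jacobiP k 2 1 x = (((k+2).factorial : ℝ) / ((k.factorial : ℝ) * (k+3).factorial)) *
      ∑ m ∈ Finset.range (k+1),
        (k.choose m : ℝ) * (((k+m+3).factorial : ℝ) / ((m+2).factorial : ℝ)) * ((x-1)/2)^m := by
  unfold jacobiP
  refine congrArg₂ (· * ·) ?_ (Finset.sum_congr rfl fun m _ => ?_)
  · rw [show (2:ℝ)+k+1 = ((k+2:ℕ):ℝ)+1 by push_cast; ring, Real.Gamma_nat_eq_factorial,
      show (2:ℝ)+1+k+1 = ((k+3:ℕ):ℝ)+1 by push_cast; ring, Real.Gamma_nat_eq_factorial]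
  · rw [show (2:ℝ)+1+k+m+1 = ((k+m+3:ℕ):ℝ)+1 by push_cast; ring, Real.Gamma_nat_eq_factorial,
      show (2:ℝ)+m+1 = ((m+2:ℕ):ℝ)+1 by push_cast; ring, Real.Gamma_nat_eq_factorial]

lemma jacobiP12 (n : ℕ) (x : ℝ) :
    jacobiP n 1 2 x = (((n+1).factorial : ℝ) / ((n.factorial : ℝ) * (n+3).factorial)) *
      ∑ m ∈ Finset.range (n+1),
        (n.choose m : ℝ) * (((n+m+3).factorial : ℝ) / ((m+1).factorial : ℝ)) * ((x-1)/2)^m := by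
  unfold jacobiP
  refine congrArg₂ (· * ·) ?_ (Finset.sum_congr rfl fun m _ => ?_)
  · rw [show (1:ℝ)+n+1 = ((n+1:ℕ):ℝ)+1 by push_cast; ring, Real.Gamma_nat_eq_factorial,
      show (1:ℝ)+2+n+1 = ((n+3:ℕ):ℝ)+1 by push_cast; ring, Real.Gamma_nat_eq_factorial]
  · rw [show (1:ℝ)+2+n+m+1 = ((n+m+3:ℕ):ℝ)+1 by push_cast; ring, Real.Gamma_nat_eq_factorial,
      show (1:ℝ)+m+1 = ((m+1:ℕ):ℝ)+1 by push_cast; ring, Real.Gamma_nat_eq_factorial]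

lemma factR_pos (n : ℕ) : (0:ℝ) < (n.factorial : ℝ) := by
  exact_mod_cast n.factorial_pos

lemma factR_ne (n : ℕ) : ((n.factorial : ℝ)) ≠ 0 := (factR_pos n).ne'

lemma jacobiP21_one (k : ℕ) :
    jacobiP k 2 1 1 = ((k+2).factorial : ℝ) / (2 * (k.factorial : ℝ)) := by
  rw [jacobiP21]
  have : ∑ m ∈ Finset.range (k+1),
      (k.choose m : ℝ) * (((k+m+3).factorial : ℝ) / ((m+2).factorial : ℝ)) * ((1-1)/2)^m
      = ((k+3).factorial : ℝ) / 2 := by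
    rw [Finset.sum_eq_single 0]
    · simp [Nat.factorial]
    · intro b _ hb; simp [zero_pow hb]
    · simp
  rw [this]
  have h3 := factR_ne (k+3)
  have hk := factR_ne k
  field_simp

lemma jacobiP12_one (n : ℕ) :
    jacobiP n 1 2 1 = ((n:ℝ) + 1) := by
  rw [jacobiP12]
  have : ∑ m ∈ Finset.range (n+1),
      (n.choose m : ℝ) * (((n+m+3).factorial : ℝ) / ((m+1).factorial : ℝ)) * ((1-1)/2)^m
      = ((n+3).factorial : ℝ) := by
    rw [Finset.sum_eq_single 0]
    · simp [Nat.factorial]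
    · intro b _ hb; simp [zero_pow hb]
    · simp
  rw [this]
  have h3 := factR_ne (n+3)
  have hn := factR_ne n
  have : ((n+1).factorial : ℝ) = (n+1) * n.factorial := by
    rw [Nat.factorial_succ]; push_cast; ring
  rw [this]
  field_simp

lemma jacobiR21 (k : ℕ) (x : ℝ) :
    jacobiR k 2 1 x = ∑ m ∈ Finset.range (k+1), cA k m * ((x-1)/2)^m := by
  unfold jacobiR
  rw [jacobiP21, jacobiP21_one]
  rw [div_eq_iff (by positivity : (((k+2).factorial : ℝ) / (2 * (k.factorial : ℝ))) ≠ 0)]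
  rw [Finset.sum_mul, Finset.mul_sum]
  refine Finset.sum_congr rfl fun m _ => ?_
  unfold cA
  have h1 := factR_ne (k+2)
  have h2 := factR_ne k
  have h3 := factR_ne (k+3)
  have h4 := factR_ne (m+2)
  field_simp

lemma jacobiR12 (n : ℕ) (x : ℝ) :
    jacobiR n 1 2 x = ∑ m ∈ Finset.range (n+1), cB n m * ((x-1)/2)^m := by
  unfold jacobiR
  rw [jacobiP12, jacobiP12_one]
  rw [div_eq_iff (by positivity : ((n:ℝ)+1) ≠ 0)]
  rw [Finset.sum_mul, Finset.mul_sum]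
  refine Finset.sum_congr rfl fun m _ => ?_
  unfold cB
  have h1 := factR_ne (n+1)
  have h2 := factR_ne n
  have h3 := factR_ne (n+3)
  have h4 := factR_ne (m+1)
  have h5 : ((n+1).factorial : ℝ) = (n+1) * n.factorial := by
    rw [Nat.factorial_succ]; push_cast; ring
  rw [h5]
  field_simp



lemma hasDerivAt_t_pow (j : ℕ) (x : ℝ) :
    HasDerivAt (fun y : ℝ => ((y-1)/2)^(j+1)) (((j:ℝ)+1) * ((x-1)/2)^j / 2) x := by
  have h : HasDerivAt (fun y : ℝ => (y-1)/2) (1/2) x := by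
    simpa using ((hasDerivAt_id x).sub_const 1).div_const 2
  have := h.fun_pow (j+1)
  simp only [Nat.add_sub_cancel] at this
  refine this.congr_deriv ?_
  push_cast; ring

lemma iteratedDeriv_two_sum (c : ℕ → ℝ) (k : ℕ) (x : ℝ) :
    iteratedDeriv 2 (fun y => ∑ m ∈ Finset.range (k+1),
        c m * (8*((y-1)/2)^(m+2) + 8*((y-1)/2)^(m+3))) x
    = ∑ m ∈ Finset.range (k+1), c m *
        (2*((m:ℝ)+1)*((m:ℝ)+2)*((x-1)/2)^m + 2*((m:ℝ)+2)*((m:ℝ)+3)*((x-1)/2)^(m+1)) := by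
  have h1 : ∀ y : ℝ, HasDerivAt (fun y => ∑ m ∈ Finset.range (k+1),
      c m * (8*((y-1)/2)^(m+2) + 8*((y-1)/2)^(m+3)))
      (∑ m ∈ Finset.range (k+1),
        c m * (4*((m:ℝ)+2)*((y-1)/2)^(m+1) + 4*((m:ℝ)+3)*((y-1)/2)^(m+2))) y := by
    intro y
    refine HasDerivAt.fun_sum fun m _ => ?_
    have ha := (hasDerivAt_t_pow (m+1) y).const_mul (8:ℝ)
    have hb := (hasDerivAt_t_pow (m+2) y).const_mul (8:ℝ)
    have := ((ha.fun_add hb).const_mul (c m))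
    refine this.congr_deriv ?_
    push_cast; ring
  have h2 : ∀ y : ℝ, HasDerivAt (fun y => ∑ m ∈ Finset.range (k+1),
      c m * (4*((m:ℝ)+2)*((y-1)/2)^(m+1) + 4*((m:ℝ)+3)*((y-1)/2)^(m+2)))
      (∑ m ∈ Finset.range (k+1),
        c m * (2*((m:ℝ)+1)*((m:ℝ)+2)*((y-1)/2)^m + 2*((m:ℝ)+2)*((m:ℝ)+3)*((y-1)/2)^(m+1))) y := by
    intro y
    refine HasDerivAt.fun_sum fun m _ => ?_
    have ha := ((hasDerivAt_t_pow m y).const_mul ((4:ℝ)*((m:ℝ)+2)))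
    have hb := ((hasDerivAt_t_pow (m+1) y).const_mul ((4:ℝ)*((m:ℝ)+3)))
    have := (ha.fun_add hb).const_mul (c m)
    refine this.congr_deriv ?_
    push_cast; ring
  rw [iteratedDeriv_succ, iteratedDeriv_one]
  have hd : deriv (fun y => ∑ m ∈ Finset.range (k+1),
      c m * (8*((y-1)/2)^(m+2) + 8*((y-1)/2)^(m+3))) = fun y =>
      ∑ m ∈ Finset.range (k+1),
        c m * (4*((m:ℝ)+2)*((y-1)/2)^(m+1) + 4*((m:ℝ)+3)*((y-1)/2)^(m+2)) :=
    funext fun y => (h1 y).deriv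
  rw [hd]
  exact (h2 x).deriv

lemma fact_cast_succ (n m : ℕ) (h : n = m + 1) :
    ((n.factorial : ℝ)) = ((m:ℝ)+1) * (m.factorial : ℝ) := by
  subst h; rw [Nat.factorial_succ]; push_cast; ring

lemma choose_cast (n r s : ℕ) (h : n = r + s) :
    ((n.choose r : ℝ)) = (n.factorial : ℝ) / ((r.factorial : ℝ) * (s.factorial : ℝ)) := by
  subst h
  rw [Nat.cast_choose ℝ (by omega : r ≤ r + s)]
  simp [Nat.add_sub_cancel_left]

set_option maxHeartbeats 4000000 in
lemma key_int (k p : ℕ) (h : p + 2 ≤ k) :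
    2*((p:ℝ)+2)*((p:ℝ)+3)*(cA k (p+1) + cA k p) =
      (2*((k:ℝ)+3)*((k:ℝ)+4)/(2*(k:ℝ)+5)) * cB (k+1) (p+1)
      - (((k:ℝ)+1)*((k:ℝ)+3)/(((k:ℝ)+3/2)*((k:ℝ)+5/2))) * cB k (p+1)
      - (2*(k:ℝ)*((k:ℝ)+1)/(2*(k:ℝ)+3)) * cB (k-1) (p+1) := by
  obtain ⟨e, rfl⟩ := Nat.exists_eq_add_of_le h
  have n1 := factR_ne (2*p+e+5)
  have n2 := factR_ne (p+e+1)
  have n5 := factR_ne p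
  have n6 := factR_ne e
  have dp1 : ((p:ℝ)+1) ≠ 0 := by positivity
  have dp2 : ((p:ℝ)+2) ≠ 0 := by positivity
  have dp3 : ((p:ℝ)+3) ≠ 0 := by positivity
  have de1 : ((e:ℝ)+1) ≠ 0 := by positivity
  have de2 : ((e:ℝ)+2) ≠ 0 := by positivity
  have g2 : ((p:ℝ)+(e:ℝ)+2) ≠ 0 := by positivity
  have g3 : ((p:ℝ)+(e:ℝ)+3) ≠ 0 := by positivity
  have g4 : ((p:ℝ)+(e:ℝ)+4) ≠ 0 := by positivity
  have g5 : ((p:ℝ)+(e:ℝ)+5) ≠ 0 := by positivity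
  have g6 : ((p:ℝ)+(e:ℝ)+6) ≠ 0 := by positivity
  set W : ℝ := (((p+e+2).factorial : ℝ) * ((2*p+e+5).factorial : ℝ)) /
      (((p+1).factorial : ℝ) * ((e+1).factorial : ℝ) * ((p+2).factorial : ℝ) *
        ((p+e+5).factorial : ℝ)) with hWdef
  have hW : W ≠ 0 := by
    apply div_ne_zero (mul_ne_zero (factR_ne _) (factR_ne _))
    exact mul_ne_zero (mul_ne_zero (mul_ne_zero (factR_ne _) (factR_ne _)) (factR_ne _)) (factR_ne _)
  have h1 : cA (p+2+e) (p+1) = 2*(2*(p:ℝ)+(e:ℝ)+6)/((p:ℝ)+3) * W := by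
    unfold cA
    simp only [show p+2+e+(p+1)+3 = 2*p+e+6 from by omega]
    simp only [show p+2+e+3 = p+e+5 from by omega]
    simp only [show p+2+e = p+e+2 from by omega]
    rw [choose_cast (p+e+2) (p+1) (e+1) (by omega), hWdef]
    simp only [fact_cast_succ (p+e+6) (p+e+5) (by omega),
      fact_cast_succ (p+e+5) (p+e+4) (by omega),
      fact_cast_succ (p+e+4) (p+e+3) (by omega),
      fact_cast_succ (p+e+3) (p+e+2) (by omega),
      fact_cast_succ (p+e+2) (p+e+1) (by omega),
      fact_cast_succ (2*p+e+7) (2*p+e+6) (by omega),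
      fact_cast_succ (2*p+e+6) (2*p+e+5) (by omega),
      fact_cast_succ (p+3) (p+2) (by omega),
      fact_cast_succ (p+2) (p+1) (by omega),
      fact_cast_succ (p+1) p (by omega),
      fact_cast_succ (e+2) (e+1) (by omega),
      fact_cast_succ (e+1) e (by omega)]
    field_simp
    push_cast; ring
  have h2 : cA (p+2+e) p = 2*((p:ℝ)+1)/((e:ℝ)+2) * W := by
    unfold cA
    simp only [show p+2+e+p+3 = 2*p+e+5 from by omega]
    simp only [show p+2+e+3 = p+e+5 from by omega]
    simp only [show p+2+e = p+e+2 from by omega]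
    rw [choose_cast (p+e+2) p (e+2) (by omega), hWdef]
    simp only [fact_cast_succ (p+e+6) (p+e+5) (by omega),
      fact_cast_succ (p+e+5) (p+e+4) (by omega),
      fact_cast_succ (p+e+4) (p+e+3) (by omega),
      fact_cast_succ (p+e+3) (p+e+2) (by omega),
      fact_cast_succ (p+e+2) (p+e+1) (by omega),
      fact_cast_succ (2*p+e+7) (2*p+e+6) (by omega),
      fact_cast_succ (2*p+e+6) (2*p+e+5) (by omega),
      fact_cast_succ (p+3) (p+2) (by omega),
      fact_cast_succ (p+2) (p+1) (by omega),
      fact_cast_succ (p+1) p (by omega),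
      fact_cast_succ (e+2) (e+1) (by omega),
      fact_cast_succ (e+1) e (by omega)]
    field_simp
    push_cast; ring
  have h3 : cB (p+2+e+1) (p+1) =
      ((p:ℝ)+(e:ℝ)+3)*(2*(p:ℝ)+(e:ℝ)+6)*(2*(p:ℝ)+(e:ℝ)+7)/(((e:ℝ)+2)*((p:ℝ)+(e:ℝ)+6)) * W := by
    unfold cB
    simp only [show p+2+e+1+(p+1)+3 = 2*p+e+7 from by omega]
    simp only [show p+2+e+1+3 = p+e+6 from by omega]
    simp only [show p+2+e+1 = p+e+3 from by omega]
    rw [choose_cast (p+e+3) (p+1) (e+2) (by omega), hWdef]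
    simp only [fact_cast_succ (p+e+6) (p+e+5) (by omega),
      fact_cast_succ (p+e+5) (p+e+4) (by omega),
      fact_cast_succ (p+e+4) (p+e+3) (by omega),
      fact_cast_succ (p+e+3) (p+e+2) (by omega),
      fact_cast_succ (p+e+2) (p+e+1) (by omega),
      fact_cast_succ (2*p+e+7) (2*p+e+6) (by omega),
      fact_cast_succ (2*p+e+6) (2*p+e+5) (by omega),
      fact_cast_succ (p+3) (p+2) (by omega),
      fact_cast_succ (p+2) (p+1) (by omega),
      fact_cast_succ (p+1) p (by omega),
      fact_cast_succ (e+2) (e+1) (by omega),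
      fact_cast_succ (e+1) e (by omega)]
    field_simp
    push_cast; ring
  have h4 : cB (p+2+e) (p+1) = (2*(p:ℝ)+(e:ℝ)+6) * W := by
    unfold cB
    simp only [show p+2+e+(p+1)+3 = 2*p+e+6 from by omega]
    simp only [show p+2+e+3 = p+e+5 from by omega]
    simp only [show p+2+e = p+e+2 from by omega]
    rw [choose_cast (p+e+2) (p+1) (e+1) (by omega), hWdef]
    simp only [fact_cast_succ (p+e+6) (p+e+5) (by omega),
      fact_cast_succ (p+e+5) (p+e+4) (by omega),
      fact_cast_succ (p+e+4) (p+e+3) (by omega),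
      fact_cast_succ (p+e+3) (p+e+2) (by omega),
      fact_cast_succ (p+e+2) (p+e+1) (by omega),
      fact_cast_succ (2*p+e+7) (2*p+e+6) (by omega),
      fact_cast_succ (2*p+e+6) (2*p+e+5) (by omega),
      fact_cast_succ (p+3) (p+2) (by omega),
      fact_cast_succ (p+2) (p+1) (by omega),
      fact_cast_succ (p+1) p (by omega),
      fact_cast_succ (e+2) (e+1) (by omega),
      fact_cast_succ (e+1) e (by omega)]
    field_simp
    push_cast; ring
  have h5 : cB (p+2+e-1) (p+1) = ((e:ℝ)+1)*((p:ℝ)+(e:ℝ)+5)/((p:ℝ)+(e:ℝ)+2) * W := by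
    unfold cB
    simp only [show p+2+e-1 = p+e+1 from by omega]
    simp only [show p+e+1+(p+1)+3 = 2*p+e+5 from by omega]
    simp only [show p+e+1+3 = p+e+4 from by omega]
    rw [choose_cast (p+e+1) (p+1) e (by omega), hWdef]
    simp only [fact_cast_succ (p+e+6) (p+e+5) (by omega),
      fact_cast_succ (p+e+5) (p+e+4) (by omega),
      fact_cast_succ (p+e+4) (p+e+3) (by omega),
      fact_cast_succ (p+e+3) (p+e+2) (by omega),
      fact_cast_succ (p+e+2) (p+e+1) (by omega),
      fact_cast_succ (2*p+e+7) (2*p+e+6) (by omega),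
      fact_cast_succ (2*p+e+6) (2*p+e+5) (by omega),
      fact_cast_succ (p+3) (p+2) (by omega),
      fact_cast_succ (p+2) (p+1) (by omega),
      fact_cast_succ (p+1) p (by omega),
      fact_cast_succ (e+2) (e+1) (by omega),
      fact_cast_succ (e+1) e (by omega)]
    field_simp
    push_cast; ring
  rw [h1, h2, h3, h4, h5]
  have d5 : 2*((p:ℝ)+2+(e:ℝ))+5 ≠ 0 := by positivity
  have d6 : 2*((p:ℝ)+2+(e:ℝ))+3 ≠ 0 := by positivity
  have d7 : ((p:ℝ)+2+(e:ℝ))+3/2 ≠ 0 := by positivity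
  have d8 : ((p:ℝ)+2+(e:ℝ))+5/2 ≠ 0 := by positivity
  push_cast
  field_simp
  ring

lemma cA_zero (k m : ℕ) (h : k < m) : cA k m = 0 := by
  unfold cA; simp [Nat.choose_eq_zero_of_lt h]

lemma cB_zero (n m : ℕ) (h : n < m) : cB n m = 0 := by
  unfold cB; simp [Nat.choose_eq_zero_of_lt h]

lemma key0 (k : ℕ) :
    2*((0:ℝ)+1)*((0:ℝ)+2)*cA k 0 =
      (2*((k:ℝ)+3)*((k:ℝ)+4)/(2*(k:ℝ)+5)) * cB (k+1) 0
      - (((k:ℝ)+1)*((k:ℝ)+3)/(((k:ℝ)+3/2)*((k:ℝ)+5/2))) * cB k 0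
      - (2*(k:ℝ)*((k:ℝ)+1)/(2*(k:ℝ)+3)) * cB (k-1) 0 := by
  have hA : cA k 0 = 1 := by
    unfold cA
    simp only [Nat.choose_zero_right, Nat.add_zero, Nat.cast_one]
    have := factR_ne (k+3)
    rw [show ((0:ℕ)+2).factorial = 2 from rfl]
    push_cast
    field_simp
  have hB : ∀ n : ℕ, cB n 0 = 1 := by
    intro n
    unfold cB
    simp only [Nat.choose_zero_right, Nat.add_zero, Nat.cast_one]
    have := factR_ne (n+3)
    rw [show ((0:ℕ)+1).factorial = 1 from rfl]
    push_cast
    field_simp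
  rw [hA, hB, hB, hB]
  have d5 : 2*(k:ℝ)+5 ≠ 0 := by positivity
  have d6 : 2*(k:ℝ)+3 ≠ 0 := by positivity
  have d7 : (k:ℝ)+3/2 ≠ 0 := by positivity
  have d8 : (k:ℝ)+5/2 ≠ 0 := by positivity
  field_simp
  ring

set_option maxHeartbeats 1000000 in
lemma key_top (p : ℕ) :
    2*((p:ℝ)+2)*((p:ℝ)+3)*(cA (p+1) (p+1) + cA (p+1) p) =
      (2*(((p:ℝ)+1)+3)*(((p:ℝ)+1)+4)/(2*((p:ℝ)+1)+5)) * cB (p+2) (p+1)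
      - ((((p:ℝ)+1)+1)*(((p:ℝ)+1)+3)/((((p:ℝ)+1)+3/2)*(((p:ℝ)+1)+5/2))) * cB (p+1) (p+1)
      - (2*((p:ℝ)+1)*(((p:ℝ)+1)+1)/(2*((p:ℝ)+1)+3)) * cB p (p+1) := by
  have hz : cB p (p+1) = 0 := cB_zero p (p+1) (by omega)
  rw [hz]
  unfold cA cB
  simp only [Nat.choose_self, Nat.choose_succ_self_right, Nat.cast_one, Nat.cast_add]
  simp only [show p+1+(p+1)+3 = 2*p+5 from by omega, show p+1+p+3 = 2*p+4 from by omega,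
    show p+2+(p+1)+3 = 2*p+6 from by omega]
  simp only [show p+1+2 = p+3 from by omega, show p+1+3 = p+4 from by omega,
    show p+2+3 = p+5 from by omega, show p+1+1 = p+2 from by omega]
  simp only [fact_cast_succ (2*p+6) (2*p+5) (by omega),
    fact_cast_succ (2*p+5) (2*p+4) (by omega),
    fact_cast_succ (p+5) (p+4) (by omega),
    fact_cast_succ (p+4) (p+3) (by omega),
    fact_cast_succ (p+3) (p+2) (by omega),
    fact_cast_succ (p+2) (p+1) (by omega),
    fact_cast_succ (p+1) p (by omega)]
  have n1 := factR_ne p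
  have n2 := factR_ne (2*p+4)
  have dp1 : ((p:ℝ)+1) ≠ 0 := by positivity
  have dp2 : ((p:ℝ)+2) ≠ 0 := by positivity
  have dp3 : ((p:ℝ)+3) ≠ 0 := by positivity
  have dp4 : ((p:ℝ)+4) ≠ 0 := by positivity
  have dp5 : ((p:ℝ)+5) ≠ 0 := by positivity
  have d5 : 2*((p:ℝ)+1)+5 ≠ 0 := by positivity
  have d6 : 2*((p:ℝ)+1)+3 ≠ 0 := by positivity
  have d7 : ((p:ℝ)+1)+3/2 ≠ 0 := by positivity
  have d8 : ((p:ℝ)+1)+5/2 ≠ 0 := by positivity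
  push_cast
  field_simp
  ring

set_option maxHeartbeats 1000000 in
lemma key_last (p : ℕ) :
    2*((p:ℝ)+2)*((p:ℝ)+3)*(cA p (p+1) + cA p p) =
      (2*((p:ℝ)+3)*((p:ℝ)+4)/(2*(p:ℝ)+5)) * cB (p+1) (p+1)
      - (((p:ℝ)+1)*((p:ℝ)+3)/(((p:ℝ)+3/2)*((p:ℝ)+5/2))) * cB p (p+1)
      - (2*(p:ℝ)*((p:ℝ)+1)/(2*(p:ℝ)+3)) * cB (p-1) (p+1) := by
  rw [cA_zero p (p+1) (by omega), cB_zero p (p+1) (by omega),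
    cB_zero (p-1) (p+1) (by omega)]
  unfold cA cB
  simp only [Nat.choose_self, Nat.cast_one]
  simp only [show p+p+3 = 2*p+3 from by omega, show p+1+(p+1)+3 = 2*p+5 from by omega]
  simp only [show p+1+1 = p+2 from by omega, show p+1+3 = p+4 from by omega]
  simp only [fact_cast_succ (2*p+5) (2*p+4) (by omega),
    fact_cast_succ (2*p+4) (2*p+3) (by omega),
    fact_cast_succ (p+4) (p+3) (by omega),
    fact_cast_succ (p+3) (p+2) (by omega)]
  have n1 := factR_ne (2*p+3)
  have n2 := factR_ne (p+2)
  have dp3 : ((p:ℝ)+3) ≠ 0 := by positivity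
  have dp4 : ((p:ℝ)+4) ≠ 0 := by positivity
  have d5 : 2*(p:ℝ)+5 ≠ 0 := by positivity
  have d6 : 2*(p:ℝ)+3 ≠ 0 := by positivity
  have d7 : (p:ℝ)+3/2 ≠ 0 := by positivity
  have d8 : (p:ℝ)+5/2 ≠ 0 := by positivity
  push_cast
  field_simp
  ring


noncomputable def gS (k : ℕ) (T : ℝ) : ℕ → ℝ
  | 0 => 0
  | (q+1) => 2*((q:ℝ)+2)*((q:ℝ)+3)*(cA k q)*T^(q+1)

set_option maxHeartbeats 1000000 in
theorem secondDeriv_basis3 (k : ℕ) (hk : 1 ≤ k) (x : ℝ) :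
    iteratedDeriv 2 (fun y => (1 - y ^ 2) * (1 - y) * jacobiR k 2 1 y) x =
      (2 * ((k : ℝ) + 3) * ((k : ℝ) + 4) / (2 * (k : ℝ) + 5)) * jacobiR (k + 1) 1 2 x -
        (((k : ℝ) + 1) * ((k : ℝ) + 3) / (((k : ℝ) + 3 / 2) * ((k : ℝ) + 5 / 2))) *
          jacobiR k 1 2 x -
        (2 * (k : ℝ) * ((k : ℝ) + 1) / (2 * (k : ℝ) + 3)) * jacobiR (k - 1) 1 2 x := by
  have hfun : (fun y => (1 - y ^ 2) * (1 - y) * jacobiR k 2 1 y)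
      = fun y => ∑ m ∈ Finset.range (k+1), cA k m * (8*((y-1)/2)^(m+2) + 8*((y-1)/2)^(m+3)) := by
    funext y
    rw [jacobiR21, Finset.mul_sum]
    exact Finset.sum_congr rfl fun m _ => by ring
  rw [hfun, iteratedDeriv_two_sum (cA k) k x, jacobiR12, jacobiR12, jacobiR12]
  rw [show (k-1)+1 = k from by omega]
  set T := (x-1)/2 with hT
  have hL : ∑ m ∈ Finset.range (k+1), cA k m *
        (2*((m:ℝ)+1)*((m:ℝ)+2)*T^m + 2*((m:ℝ)+2)*((m:ℝ)+3)*T^(m+1))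
      = ∑ m ∈ Finset.range (k+2),
          (2*((m:ℝ)+1)*((m:ℝ)+2)*(cA k m)*T^m + gS k T m) := by
    have step1 : ∑ m ∈ Finset.range (k+1), cA k m *
          (2*((m:ℝ)+1)*((m:ℝ)+2)*T^m + 2*((m:ℝ)+2)*((m:ℝ)+3)*T^(m+1))
        = ∑ m ∈ Finset.range (k+1),
            (2*((m:ℝ)+1)*((m:ℝ)+2)*(cA k m)*T^m + gS k T (m+1)) :=
      Finset.sum_congr rfl fun m _ => by
        show _ = _ + 2*((m:ℝ)+2)*((m:ℝ)+3)*(cA k m)*T^(m+1)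
        ring
    rw [step1, Finset.sum_add_distrib, Finset.sum_add_distrib,
      show k+2 = (k+1)+1 from rfl, Finset.sum_range_succ
        (fun m => 2*((m:ℝ)+1)*((m:ℝ)+2)*(cA k m)*T^m) (k+1),
      Finset.sum_range_succ' (gS k T) (k+1),
      cA_zero k (k+1) (by omega)]
    show _ + _ = _ + _ * 0 * _ + (_ + gS k T 0)
    show _ + _ = _ + _ * 0 * _ + (_ + 0)
    ring
  rw [hL]
  have hS2 : (∑ m ∈ Finset.range (k+1), cB k m * T^m)
      = ∑ m ∈ Finset.range (k+2), cB k m * T^m := by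
    conv_rhs => rw [show k+2 = (k+1)+1 from rfl, Finset.sum_range_succ]
    rw [cB_zero k (k+1) (by omega)]
    ring
  have hS3 : (∑ m ∈ Finset.range k, cB (k-1) m * T^m)
      = ∑ m ∈ Finset.range (k+2), cB (k-1) m * T^m := by
    conv_rhs => rw [show k+2 = (k+1)+1 from rfl, Finset.sum_range_succ, Finset.sum_range_succ]
    rw [cB_zero (k-1) (k+1) (by omega), cB_zero (k-1) k (by omega)]
    ring
  rw [show k+1+1 = k+2 from rfl, hS2, hS3,
    Finset.mul_sum, Finset.mul_sum, Finset.mul_sum,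
    ← Finset.sum_sub_distrib, ← Finset.sum_sub_distrib]
  refine Finset.sum_congr rfl fun m hm => ?_
  have hm' : m ≤ k+1 := by
    have := Finset.mem_range.mp hm; omega
  rcases m with _ | q
  · rw [show gS k T 0 = 0 from rfl]
    push_cast
    linear_combination (key0 k) * T^(0:ℕ)
  · rw [show gS k T (q+1) = 2*((q:ℝ)+2)*((q:ℝ)+3)*(cA k q)*T^(q+1) from rfl]
    by_cases h1 : q+2 ≤ k
    · push_cast
      linear_combination (key_int k q h1) * T^(q+1)
    · by_cases h2 : q+1 = k
      · subst h2
        push_cast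
        linear_combination (key_top q) * T^(q+1)
      · have h3 : q = k := by omega
        subst h3
        push_cast
        linear_combination (key_last q) * T^(q+1)
end
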